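/- Let ν : [0,1] → ℝ be continuous and strictly positive, and let f : [0,1] → ℝ be continuously differentiable with f(0) = 0. Then ∫₀¹ |f(x)| ν(x) dx ≤ C · ∫₀¹ |f'(x)| ν(x) dx, where C = max_{0 ≤ x ≤ 1} (1/ν(x)) ∫ₓ¹ ν(z) dz. -/

import Mathlib

open MeasureTheory Set intervalIntegral

/-- Sharp weighted L¹ Poincaré inequality on [0,1] for C¹ functions vanishing at 0. -/
theorem stmt_0 (ν f f' : ℝ → ℝ)
    (hν : ContinuousOn ν (Icc 0 1)) (hνpos : ∀ x ∈ Icc (0:ℝ) 1, 0 < ν x)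
    (hf : ∀ x ∈ Icc (0:ℝ) 1, HasDerivAt f (f' x) x)
    (hf' : ContinuousOn f' (Icc 0 1))
    (hf0 : f 0 = 0)
    (C : ℝ)
    (hC : IsGreatest ((fun x => (1 / ν x) * ∫ z in x..1, ν z) '' Icc 0 1) C) :
    ∫ x in (0:ℝ)..1, |f x| * ν x ≤ C * ∫ x in (0:ℝ)..1, |f' x| * ν x := by
  -- projection onto [0,1]
  set m : ℝ → ℝ := fun x => min 1 (max 0 x) with hm
  have hmcont : Continuous m := (continuous_const.min (continuous_const.max continuous_id))
  have hmmem : ∀ x, m x ∈ Icc (0:ℝ) 1 := by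
    intro x
    constructor
    · exact le_min zero_le_one (le_max_left _ _)
    · exact min_le_left _ _
  have hmid : ∀ x ∈ Icc (0:ℝ) 1, m x = x := by
    intro x hx
    simp [hm, max_eq_right hx.1, min_eq_right hx.2]
  set νe : ℝ → ℝ := fun x => ν (m x) with hνe
  set ge : ℝ → ℝ := fun x => f' (m x) with hge
  have hνecont : Continuous νe := hν.comp_continuous hmcont hmmem
  have hgecont : Continuous ge := hf'.comp_continuous hmcont hmmem
  have hνeeq : EqOn νe ν (Icc 0 1) := fun x hx => by simp [hνe, hmid x hx]
  have hgeeq : EqOn ge f' (Icc 0 1) := fun x hx => by simp [hge, hmid x hx]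
  have hνepos : ∀ x, 0 < νe x := fun x => hνpos _ (hmmem x)
  -- g = ∫₀ˣ |f'|
  set g : ℝ → ℝ := fun x => ∫ t in (0:ℝ)..x, |ge t| with hgdef
  have habs : Continuous fun t => |ge t| := hgecont.abs
  have hgderiv : ∀ x : ℝ, HasDerivAt g (|ge x|) x := by
    intro x
    exact intervalIntegral.integral_hasDerivAt_right (habs.intervalIntegrable _ _)
      (habs.stronglyMeasurableAtFilter _ _) habs.continuousAt
  -- |f x| ≤ g x on [0,1]
  have hfg : ∀ x ∈ Icc (0:ℝ) 1, |f x| ≤ g x := by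
    intro x hx
    have hsub : Icc (0:ℝ) x ⊆ Icc 0 1 := Icc_subset_Icc le_rfl hx.2
    have hftc : ∫ t in (0:ℝ)..x, f' t = f x - f 0 := by
      apply intervalIntegral.integral_eq_sub_of_hasDerivAt
      · intro t ht
        rw [uIcc_of_le hx.1] at ht
        exact hf t (hsub ht)
      · exact (hf'.mono hsub).intervalIntegrable_of_Icc hx.1
    have h1 : |f x| = |∫ t in (0:ℝ)..x, f' t| := by rw [hftc, hf0, sub_zero]
    rw [h1]
    calc |∫ t in (0:ℝ)..x, f' t| ≤ ∫ t in (0:ℝ)..x, |f' t| :=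
          intervalIntegral.abs_integral_le_integral_abs hx.1
      _ = g x := by
          refine intervalIntegral.integral_congr fun t ht => ?_
          rw [uIcc_of_le hx.1] at ht
          rw [hgeeq (hsub ht)]
  -- N x = ∫ₓ¹ νe
  set K : ℝ := ∫ t in (0:ℝ)..1, νe t with hK
  set N : ℝ → ℝ := fun x => K - ∫ t in (0:ℝ)..x, νe t with hN
  have hNderiv : ∀ x : ℝ, HasDerivAt N (-νe x) x := by
    intro x
    have := intervalIntegral.integral_hasDerivAt_right (hνecont.intervalIntegrable (0:ℝ) x)
      (hνecont.stronglyMeasurableAtFilter _ _) hνecont.continuousAt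
    have h2 := (hasDerivAt_const x K).sub this
    rw [zero_sub] at h2
    exact h2
  have hNval : ∀ x, N x = ∫ t in x..1, νe t := by
    intro x
    rw [hN]
    simp only [hK]
    exact intervalIntegral.integral_interval_sub_left (hνecont.intervalIntegrable _ _)
      (hνecont.intervalIntegrable _ _)
  -- Step: ∫ |f| ν ≤ ∫ g νe
  have step1 : ∫ x in (0:ℝ)..1, |f x| * ν x ≤ ∫ x in (0:ℝ)..1, g x * νe x := by
    rw [show (∫ x in (0:ℝ)..1, |f x| * ν x) = ∫ x in (0:ℝ)..1, |f x| * νe x from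
      intervalIntegral.integral_congr fun x hx => by
        rw [uIcc_of_le zero_le_one] at hx; rw [hνeeq hx]]
    apply intervalIntegral.integral_mono_on zero_le_one
    · apply ContinuousOn.intervalIntegrable_of_Icc zero_le_one
      have hfc : ContinuousOn f (Icc 0 1) := fun x hx => (hf x hx).continuousAt.continuousWithinAt
      exact hfc.abs.mul hνecont.continuousOn
    · have hgc : Continuous g := continuous_iff_continuousAt.mpr fun x => (hgderiv x).continuousAt
      exact (hgc.mul hνecont).intervalIntegrable _ _
    · intro x hx
      exact mul_le_mul_of_nonneg_right (hfg x hx) (hνepos x).le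
  -- Integration by parts: ∫ g νe = ∫ |ge| N
  have parts : ∫ x in (0:ℝ)..1, g x * νe x = ∫ x in (0:ℝ)..1, |ge x| * N x := by
    have := intervalIntegral.integral_mul_deriv_eq_deriv_mul
      (u := g) (v := N) (u' := fun x => |ge x|) (v' := fun x => -νe x) (a := (0:ℝ)) (b := 1)
      (fun x _ => hgderiv x) (fun x _ => hNderiv x)
      (habs.intervalIntegrable _ _) ((hνecont.neg).intervalIntegrable _ _)
    have hg0 : g 0 = 0 := by simp [hgdef]
    have hN1 : N 1 = 0 := by rw [hNval]; simp
    have h2 : (∫ x in (0:ℝ)..1, g x * -νe x) = -∫ x in (0:ℝ)..1, g x * νe x := by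
      rw [← intervalIntegral.integral_neg]
      congr 1; ext x; ring
    rw [h2, hg0, hN1] at this
    linarith [this]
  -- pointwise bound N x ≤ C * νe x on [0,1]
  have hCν : ∀ x ∈ Icc (0:ℝ) 1, N x ≤ C * νe x := by
    intro x hx
    have hmemC : (1 / ν x) * ∫ z in x..1, ν z ≤ C := hC.2 ⟨x, hx, rfl⟩
    have hpos := hνpos x hx
    have hNx : N x = ∫ z in x..1, ν z := by
      rw [hNval]
      refine intervalIntegral.integral_congr fun t ht => ?_
      rw [uIcc_of_le hx.2] at ht
      exact hνeeq ⟨le_trans hx.1 ht.1, ht.2⟩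
    rw [hNx, hνeeq hx]
    rw [div_mul_eq_mul_div, one_mul, div_le_iff₀ hpos] at hmemC
    linarith [hmemC]
  -- finish
  have step2 : ∫ x in (0:ℝ)..1, |ge x| * N x ≤ C * ∫ x in (0:ℝ)..1, |f' x| * ν x := by
    have hR : C * (∫ x in (0:ℝ)..1, |f' x| * ν x) = ∫ x in (0:ℝ)..1, |ge x| * (C * νe x) := by
      rw [← intervalIntegral.integral_const_mul]
      refine intervalIntegral.integral_congr fun x hx => ?_
      rw [uIcc_of_le zero_le_one] at hx
      rw [hgeeq hx, hνeeq hx]; ring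
    rw [hR]
    apply intervalIntegral.integral_mono_on zero_le_one
    · have hNc : Continuous N := continuous_iff_continuousAt.mpr fun x => (hNderiv x).continuousAt
      exact (habs.mul hNc).intervalIntegrable _ _
    · exact (habs.mul (continuous_const.mul hνecont)).intervalIntegrable _ _
    · intro x hx
      exact mul_le_mul_of_nonneg_left (hCν x hx) (abs_nonneg _)
  calc ∫ x in (0:ℝ)..1, |f x| * ν x ≤ ∫ x in (0:ℝ)..1, g x * νe x := step1
    _ = ∫ x in (0:ℝ)..1, |ge x| * N x := parts
    _ ≤ C * ∫ x in (0:ℝ)..1, |f' x| * ν x := step2
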